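/- Let A be a set and P : A → V a map into a real vector space such that P(a) and P(a') are linearly independent whenever a ≠ a' (in particular P(a) ≠ 0 for all a). Then the induced group homomorphism from the free group FG(A) to PL_0(V) is injective. -/

import Mathlib

/-!
STATEMENT 3: If `P : A → V` sends distinct elements to linearly independent vectors
(and `P a ≠ 0` for all `a`), then the induced group homomorphism `FG(A) → PL₀(V)`
(sending the generator `a` to the one-letter word `(P a)`) is injective.
-/

open FreeMonoid

variable (V : Type*) [AddCommGroup V] [Module ℝ V]

/-- The defining relations of `PL₀(V)`. -/
inductive PLRel : FreeMonoid V → FreeMonoid V → Prop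
  | pair (v w : V) (h : ¬ LinearIndependent ℝ ![v, w]) :
      PLRel (of v * of w) (of (v + w))
  | zero : PLRel (of (0 : V)) 1

/-- The group (as a quotient monoid) `PL₀(V)` of piecewise linear paths. -/
abbrev PL0 := (conGen (PLRel V)).Quotient

variable {V}

/-- The quotient map `FMon(V) → PL₀(V)`. -/
abbrev PLmk : FreeMonoid V →* PL0 V := (conGen (PLRel V)).mk'


open Monoid

section Aux
variable {V : Type*} [AddCommGroup V] [Module ℝ V]

/-- Component groups: for each submodule `l`, the multiplicative version of `l`. -/
abbrev LineG (V : Type*) [AddCommGroup V] [Module ℝ V] : Submodule ℝ V → Type _ :=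
  fun l => Multiplicative l

/-- The canonical generator in component `l`. -/
def ofv (l : Submodule ℝ V) (x : V) (hx : x ∈ l) : CoprodI (LineG V) :=
  CoprodI.of (i := l) (Multiplicative.ofAdd ⟨x, hx⟩)

lemma ofv_mul (l : Submodule ℝ V) (x y : V) (hx : x ∈ l) (hy : y ∈ l) :
    ofv l x hx * ofv l y hy = ofv l (x + y) (add_mem hx hy) := by
  rw [ofv, ofv, ofv, ← map_mul, ← ofAdd_add]
  rfl

lemma ofv_cast {l l' : Submodule ℝ V} (h : l = l') (x : V) (hx : x ∈ l) (hx' : x ∈ l') :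
    ofv l x hx = ofv l' x hx' := by subst h; rfl

lemma ofv_zero (l : Submodule ℝ V) : ofv l 0 (zero_mem l) = 1 := by
  rw [ofv]
  have : (Multiplicative.ofAdd (⟨(0:V), zero_mem l⟩ : l)) = 1 := rfl
  rw [this, map_one]

lemma ofv_ne_one (l : Submodule ℝ V) (x : V) (hx : x ∈ l) (h : x ≠ 0) :
    ofv l x hx ≠ 1 := by
  rw [ofv]
  intro hc
  have := CoprodI.of_injective (M := LineG V) l (by rw [hc, map_one] : _ = CoprodI.of 1)
  exact h (congrArg Subtype.val (congrArg Multiplicative.toAdd this))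

end Aux

section Aux2
variable {V : Type*} [AddCommGroup V] [Module ℝ V]

open Submodule

open scoped Classical in
/-- The map `V → CoprodI (LineG V)`. -/
noncomputable def phi0 (v : V) : CoprodI (LineG V) :=
  if h : v = 0 then 1 else ofv (span ℝ {v}) v (mem_span_singleton_self v)

lemma phi0_zero : phi0 (0 : V) = 1 := by simp [phi0]

lemma phi0_of_ne (v : V) (h : v ≠ 0) :
    phi0 v = ofv (span ℝ {v}) v (mem_span_singleton_self v) := by simp [phi0, h]

lemma exists_smul_of_dep {v w : V} (hv : v ≠ 0) (h : ¬ LinearIndependent ℝ ![v, w]) :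
    ∃ c : ℝ, c • v = w := by
  rw [LinearIndependent.pair_iff' hv] at h
  push_neg at h
  exact h

lemma phi0_rel (v w : V) (h : ¬ LinearIndependent ℝ ![v, w]) :
    phi0 v * phi0 w = phi0 (v + w) := by
  rcases eq_or_ne v 0 with rfl | hv
  · rw [phi0_zero, one_mul, zero_add]
  rcases eq_or_ne w 0 with rfl | hw
  · rw [phi0_zero, mul_one, add_zero]
  obtain ⟨c, hc⟩ := exists_smul_of_dep hv h
  have hc0 : c ≠ 0 := by rintro rfl; simp only [zero_smul] at hc; exact hw hc.symm
  have hspanw : span ℝ {w} = span ℝ {v} := by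
    rw [← hc]; exact span_singleton_smul_eq (IsUnit.mk0 c hc0) v
  have hwmem : w ∈ span ℝ {v} := hspanw ▸ mem_span_singleton_self w
  rw [phi0_of_ne v hv, phi0_of_ne w hw,
    ofv_cast hspanw w (mem_span_singleton_self w) hwmem, ofv_mul]
  rcases eq_or_ne (v + w) 0 with hvw | hvw
  · rw [show phi0 (v + w) = 1 by rw [hvw, phi0_zero]]
    have : ofv (span ℝ {v}) (v + w) (add_mem (mem_span_singleton_self v) hwmem)
        = ofv (span ℝ {v}) 0 (zero_mem _) := by
      congr 1
    rw [this]; exact ofv_zero _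
  · have hspanvw : span ℝ {v + w} = span ℝ {v} := by
      have : v + w = (1 + c) • v := by rw [add_smul, one_smul, hc]
      have h1c : (1 + c) ≠ 0 := by
        rintro h1c
        exact hvw (by rw [this, h1c, zero_smul])
      rw [this]; exact span_singleton_smul_eq (IsUnit.mk0 _ h1c) v
    rw [phi0_of_ne _ hvw, ofv_cast hspanvw (v+w) (mem_span_singleton_self _)]

/-- The induced homomorphism `PL0 V →* CoprodI (LineG V)`. -/
noncomputable def PsiHom : PL0 V →* CoprodI (LineG V) :=
  Con.lift _ (FreeMonoid.lift phi0) (by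
    apply Con.conGen_le.mpr
    rintro x y (⟨v, w, h⟩ | _)
    · show FreeMonoid.lift phi0 _ = FreeMonoid.lift phi0 _
      rw [map_mul, FreeMonoid.lift_eval_of, FreeMonoid.lift_eval_of,
        FreeMonoid.lift_eval_of, phi0_rel v w h]
    · show FreeMonoid.lift phi0 _ = FreeMonoid.lift phi0 _
      rw [FreeMonoid.lift_eval_of, map_one, phi0_zero])

lemma PsiHom_mk (x : FreeMonoid V) : PsiHom (PLmk x) = FreeMonoid.lift phi0 x := rfl

end Aux2

section Aux3

lemma reduced_cons {α : Type*} [DecidableEq α] {p : α × Bool} {L : List (α × Bool)}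
    (h : FreeGroup.reduce (p :: L) = p :: L) :
    FreeGroup.reduce L = L ∧ ∀ q L', L = q :: L' → ¬(p.1 = q.1 ∧ p.2 = !q.2) := by
  rw [FreeGroup.reduce.cons] at h
  cases hr : FreeGroup.reduce L with
  | nil =>
    rw [hr] at h
    simp only at h
    have hL : L = [] := by
      cases L with
      | nil => rfl
      | cons x t => injection h with _ h2; exact nomatch h2
    subst hL
    exact ⟨rfl, by rintro q L' ⟨⟩⟩
  | cons q t =>
    rw [hr] at h
    simp only at h
    split_ifs at h with hc
    · exfalso
      have hlen : (FreeGroup.reduce L).length ≤ L.length := FreeGroup.Red.length_le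
        (FreeGroup.reduce.red)
      rw [hr] at hlen
      have := congrArg List.length h
      simp at this hlen
      omega
    · have hL : L = q :: t := by injection h with _ h2; exact h2.symm
      refine ⟨by rw [hL, ← hr, hL], ?_⟩
      rintro q' L' hq
      rw [hL] at hq
      injection hq with h1 _
      subst h1
      exact hc

end Aux3

section Aux4
variable {V : Type*} [AddCommGroup V] [Module ℝ V] {A : Type*} (P : A → V)

open Submodule

/-- The line spanned by `P a`. -/
abbrev ll (a : A) : Submodule ℝ V := span ℝ {P a}

/-- The element `(n : ℝ) • P a` of the component group of the line of `P a`. -/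
def yelEl (a : A) (n : ℤ) : LineG V (ll P a) :=
  Multiplicative.ofAdd ⟨(n : ℝ) • P a, smul_mem _ _ (mem_span_singleton_self _)⟩

/-- The corresponding element of the free product. -/
def yel (a : A) (n : ℤ) : Monoid.CoprodI (LineG V) := Monoid.CoprodI.of (yelEl P a n)

lemma yel_eq_ofv (a : A) (n : ℤ) :
    yel P a n = ofv (ll P a) ((n : ℝ) • P a) (smul_mem _ _ (mem_span_singleton_self _)) := rfl

lemma ofv_congr (l : Submodule ℝ V) {x y : V} (h : x = y) (hx : x ∈ l) (hy : y ∈ l) :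
    ofv l x hx = ofv l y hy := by subst h; rfl

lemma yelEl_mul (a : A) (m n : ℤ) : yelEl P a m * yelEl P a n = yelEl P a (m + n) := by
  rw [yelEl, yelEl, yelEl, ← ofAdd_add]
  congr 1
  ext
  push_cast
  simp [add_smul]

lemma yelEl_ne_one (hP0 : ∀ a, P a ≠ 0) (a : A) {n : ℤ} (hn : n ≠ 0) : yelEl P a n ≠ 1 := by
  rw [yelEl]
  intro hc
  have : ((n : ℝ) • P a : V) = 0 := congrArg Subtype.val (congrArg Multiplicative.toAdd hc)
  exact smul_ne_zero (Int.cast_ne_zero.mpr hn) (hP0 a) this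

lemma yel_mul (a : A) (m n : ℤ) : yel P a m * yel P a n = yel P a (m + n) := by
  rw [yel, yel, yel, ← map_mul, yelEl_mul]

lemma yel_inv (a : A) (n : ℤ) : (yel P a n)⁻¹ = yel P a (-n) := by
  rw [yel, yel, ← map_inv]
  congr 1
  rw [yelEl, yelEl, ← ofAdd_neg]
  congr 1
  ext
  push_cast
  simp [neg_smul]

lemma ll_inj (hP0 : ∀ a, P a ≠ 0) (hP : ∀ a a', a ≠ a' → LinearIndependent ℝ ![P a, P a'])
    {a a' : A} (h : a ≠ a') : ll P a ≠ ll P a' := by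
  intro heq
  have hmem : P a' ∈ span ℝ {P a} := by
    show P a' ∈ ll P a
    rw [heq]; exact mem_span_singleton_self (P a')
  obtain ⟨c, hc⟩ := mem_span_singleton.1 hmem
  exact (LinearIndependent.pair_iff' (hP0 a)).1 (hP a a' h) c hc

/-- The letter associated to a generator/sign pair. -/
def letter (p : A × Bool) : Monoid.CoprodI (LineG V) := yel P p.1 (cond p.2 1 (-1))

end Aux4

section Aux5

open Monoid.CoprodI

lemma neWord_prod_ne_one {ι : Type*} {M : ι → Type*} [∀ i, Monoid (M i)] {i j : ι}
    (w : Monoid.CoprodI.NeWord M i j) : w.prod ≠ 1 := by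
  classical
  intro h
  have hinj : Function.Injective (Word.prod : Word M → Monoid.CoprodI M) :=
    (Word.equiv (M := M)).symm.injective
  have : w.toWord = Word.empty := hinj (by rw [show Word.prod w.toWord = w.prod from rfl,
    h, Word.prod_empty])
  exact w.toList_ne_nil (by rw [show w.toList = w.toWord.toList from rfl, this]; rfl)

variable {V : Type*} [AddCommGroup V] [Module ℝ V] {A : Type*} [DecidableEq A]

lemma main_neWord (P : A → V) (hP0 : ∀ a, P a ≠ 0)
    (hP : ∀ a a', a ≠ a' → LinearIndependent ℝ ![P a, P a']) :
    ∀ (L : List (A × Bool)) (a : A) (b : Bool),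
      FreeGroup.reduce ((a, b) :: L) = (a, b) :: L →
      ∃ (j : Submodule ℝ V) (k : ℤ) (w : NeWord (LineG V) (ll P a) j),
        w.prod = (((a, b) :: L).map (letter P)).prod ∧ k ≠ 0 ∧ (0 < k ↔ b = true) ∧
        w.head = yelEl P a k := by
  intro L
  induction L with
  | nil =>
    intro a b _
    have hk : (cond b 1 (-1) : ℤ) ≠ 0 := by cases b <;> simp
    refine ⟨ll P a, cond b 1 (-1),
      NeWord.singleton (yelEl P a (cond b 1 (-1))) (yelEl_ne_one P hP0 a hk),
      ?_, hk, by cases b <;> simp, rfl⟩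
    rw [NeWord.prod_singleton]
    simp [letter, yel]
  | cons p L ih =>
    intro a b hred
    obtain ⟨htail, hpair⟩ := reduced_cons hred
    obtain ⟨a', b'⟩ := p
    obtain ⟨j, k, w, hw, hk0, hks, hwh⟩ := ih a' b' htail
    by_cases ha : a = a'
    · subst ha
      have hbb : b = b' := by
        have hnp := hpair (a, b') L rfl
        have hnb : ¬ (b = !b') := fun h => hnp ⟨rfl, h⟩
        cases b <;> cases b' <;> first | rfl | (exact absurd (by simp) hnb)
      subst hbb
      have hsum : (cond b 1 (-1) : ℤ) + k ≠ 0 := by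
        cases b
        · simp only [Bool.false_eq_true, iff_false, not_lt] at hks
          simp only [cond_false]
          omega
        · simp only [iff_true] at hks
          simp only [cond_true]
          omega
      have hne : yelEl P a (cond b 1 (-1)) * w.head ≠ 1 := by
        rw [hwh, yelEl_mul]
        exact yelEl_ne_one P hP0 a hsum
      refine ⟨j, cond b 1 (-1) + k, NeWord.mulHead w (yelEl P a (cond b 1 (-1))) hne,
        ?_, hsum, ?_, ?_⟩
      · rw [NeWord.mulHead_prod, hw, List.map_cons, List.prod_cons]
        rfl
      · cases b
        · simp only [Bool.false_eq_true, iff_false, not_lt, cond_false] at hks ⊢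
          omega
        · simp only [iff_true, cond_true] at hks ⊢
          omega
      · rw [NeWord.mulHead_head, hwh, yelEl_mul]
    · have hll : ll P a ≠ ll P a' := ll_inj P hP0 hP ha
      have hk : (cond b 1 (-1) : ℤ) ≠ 0 := by cases b <;> simp
      refine ⟨j, cond b 1 (-1),
        NeWord.append (NeWord.singleton (yelEl P a _) (yelEl_ne_one P hP0 a hk)) hll w,
        ?_, hk, by cases b <;> simp, rfl⟩
      rw [NeWord.append_prod, NeWord.prod_singleton, hw, List.map_cons, List.prod_cons]
      rfl

end Aux5

theorem freeGroup_embeds_in_PL0 {A : Type*} (P : A → V)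
    (hP0 : ∀ a, P a ≠ 0)
    (hP : ∀ a a', a ≠ a' → LinearIndependent ℝ ![P a, P a']) :
    ∃ F : FreeGroup A →* PL0 V,
      (∀ a, F (FreeGroup.of a) = PLmk (FreeMonoid.of (P a))) ∧
      Function.Injective F := by
  classical
  -- The basic relations in `PL0 V`
  have rel1 : ∀ v w : V, ¬ LinearIndependent ℝ ![v, w] →
      PLmk (of v) * PLmk (of w) = PLmk (of (v + w)) := fun v w h => by
    rw [← map_mul]
    exact ((conGen (PLRel V)).eq).mpr (ConGen.Rel.of _ _ (PLRel.pair v w h))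
  have rel0 : PLmk (of (0 : V)) = 1 :=
    (((conGen (PLRel V)).eq).mpr (ConGen.Rel.of _ _ (PLRel.zero (V := V)))).trans rfl
  have dep : ∀ v : V, ¬ LinearIndependent ℝ ![v, -v] := fun v h => by
    have := (LinearIndependent.pair_iff.mp h) 1 1 (by simp)
    exact one_ne_zero this.1
  have dep' : ∀ v : V, ¬ LinearIndependent ℝ ![-v, v] := fun v h => by
    have := (LinearIndependent.pair_iff.mp h) 1 1 (by simp)
    exact one_ne_zero this.1
  -- the generators as units
  let u : A → (PL0 V)ˣ := fun a =>
    { val := PLmk (of (P a))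
      inv := PLmk (of (-P a))
      val_inv := by rw [rel1 _ _ (dep (P a)), add_neg_cancel, rel0]
      inv_val := by rw [rel1 _ _ (dep' (P a)), neg_add_cancel, rel0] }
  let F : FreeGroup A →* PL0 V := (Units.coeHom (PL0 V)).comp (FreeGroup.lift u)
  have hF : ∀ a, F (FreeGroup.of a) = PLmk (FreeMonoid.of (P a)) := fun a => by
    show ((FreeGroup.lift u (FreeGroup.of a) : (PL0 V)ˣ) : PL0 V) = _
    rw [FreeGroup.lift_apply_of]
  refine ⟨F, hF, ?_⟩
  -- injectivity via the free product of the line groups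
  let g : FreeGroup A →* Monoid.CoprodI (LineG V) := FreeGroup.lift (fun a => yel P a 1)
  have hcomp : (PsiHom.comp F) = g := by
    apply FreeGroup.ext_hom
    intro a
    show PsiHom (F (FreeGroup.of a)) = g (FreeGroup.of a)
    rw [hF a]
    show FreeMonoid.lift phi0 (of (P a)) = g (FreeGroup.of a)
    rw [FreeMonoid.lift_eval_of, phi0_of_ne _ (hP0 a)]
    show _ = yel P a 1
    rw [yel_eq_ofv]
    exact ofv_congr _ (by push_cast; rw [one_smul]) _ _
  have hginj : Function.Injective g := by
    rw [injective_iff_map_eq_one]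
    intro z hz
    by_contra hz1
    have hLne : z.toWord ≠ [] := fun h => hz1 (FreeGroup.toWord_eq_nil_iff.mp h)
    obtain ⟨⟨a, b⟩, L', hcons⟩ : ∃ p L', z.toWord = p :: L' := by
      cases hL : z.toWord with
      | nil => exact absurd hL hLne
      | cons p t => exact ⟨p, t, rfl⟩
    have hred : FreeGroup.reduce ((a, b) :: L') = (a, b) :: L' := by
      rw [← hcons]; exact FreeGroup.reduce_toWord z
    obtain ⟨j, k, w, hw, _, _, _⟩ := main_neWord P hP0 hP L' a b hred
    have hgz : g z = w.prod := by
      conv_lhs => rw [← FreeGroup.mk_toWord (x := z)]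
      rw [show g = FreeGroup.lift (fun a => yel P a 1) from rfl, FreeGroup.lift_mk, hw, hcons]
      congr 1
      apply List.map_congr_left
      intro p _
      cases hb : p.2 <;> simp [letter, hb, yel_inv]
    rw [hz] at hgz
    exact neWord_prod_ne_one w hgz.symm
  intro x y hxy
  apply hginj
  rw [← hcomp]
  show PsiHom (F x) = PsiHom (F y)
  rw [hxy]
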